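/- Let E be a field and F ∈ E[X,Y,Z] a homogeneous polynomial of degree k ≥ 2. Write f(X,Y) = F(X,Y,1) = f_m + f_{m+1} + ⋯ + f_k, where each f_d is the homogeneous component of degree d and f_m ≠ 0 (so the point P = ⟨(0,0,1)⟩ lies on the curve Z(F) with multiplicity m ≥ 1). Suppose: (i) Y divides f_m(X,Y) but Y² does not divide f_m(X,Y) (the line ℓ : Y = 0 counts once among the tangents of Z(F) at P); (ii) f(T,0) = F(T,0,1) = c·T^k for some nonzero c ∈ E (the intersection multiplicity of ℓ and Z(F) at P equals k); (iii) F has no linear factor that vanishes at (0,0,1) (Z(F) has no linear component through P). Then F is irreducible over the algebraic closure of E. -/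

import Mathlib

noncomputable section
open MvPolynomial

namespace Stmt17Aux

variable {σ : Type*} {R : Type*} [CommRing R]

lemma degree_add (x y : σ →₀ ℕ) : (x + y).degree = x.degree + y.degree := by
  simp [Finsupp.degree_eq_weight_one, map_add]

lemma coeff_eq_zero_of_hc {p : MvPolynomial σ R} {d : σ →₀ ℕ}
    (h : homogeneousComponent d.degree p = 0) : coeff d p = 0 := by
  have := coeff_homogeneousComponent (d.degree) p d
  rw [if_pos rfl, h] at this
  simpa using this.symm

lemma hc_mul_top {g h : MvPolynomial σ R} {a b : ℕ}
    (hg : ∀ j, a < j → homogeneousComponent j g = 0)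
    (hh : ∀ j, b < j → homogeneousComponent j h = 0) :
    homogeneousComponent (a + b) (g * h)
      = homogeneousComponent a g * homogeneousComponent b h := by
  classical
  ext d
  rw [coeff_homogeneousComponent]
  by_cases hd : d.degree = a + b
  · rw [if_pos hd, coeff_mul, coeff_mul]
    refine Finset.sum_congr rfl ?_
    rintro ⟨x, y⟩ hxy
    rw [Finset.HasAntidiagonal.mem_antidiagonal] at hxy
    have hdeg : x.degree + y.degree = a + b := by
      rw [← degree_add, hxy, hd]
    simp only []
    rw [coeff_homogeneousComponent, coeff_homogeneousComponent]
    by_cases hx : x.degree = a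
    · have hy : y.degree = b := by omega
      rw [if_pos hx, if_pos hy]
    · rcases Nat.lt_or_ge x.degree a with hlt | hge
      · -- then y.degree > b
        have hy : b < y.degree := by omega
        have : coeff y h = 0 := coeff_eq_zero_of_hc (hh _ hy)
        rw [this, if_neg hx]
        simp
      · have hx' : a < x.degree := lt_of_le_of_ne hge (Ne.symm hx)
        have : coeff x g = 0 := coeff_eq_zero_of_hc (hg _ hx')
        rw [this, if_neg hx]
        simp
  · rw [if_neg hd]
    exact (((homogeneousComponent_isHomogeneous a g).mul
      (homogeneousComponent_isHomogeneous b h)).coeff_eq_zero hd).symm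

lemma hc_mul_bot_lt {g h : MvPolynomial σ R} {a b : ℕ}
    (hg : ∀ j, j < a → homogeneousComponent j g = 0)
    (hh : ∀ j, j < b → homogeneousComponent j h = 0) :
    (∀ j, j < a + b → homogeneousComponent j (g * h) = 0) := by
  classical
  intro j hj
  ext d
  rw [coeff_homogeneousComponent]
  by_cases hd : d.degree = j
  · rw [if_pos hd, coeff_mul]
    refine Finset.sum_eq_zero ?_
    rintro ⟨x, y⟩ hxy
    rw [Finset.HasAntidiagonal.mem_antidiagonal] at hxy
    have hdeg : x.degree + y.degree = j := by rw [← degree_add, hxy, hd]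
    simp only []
    rcases Nat.lt_or_ge x.degree a with hx | hx
    · rw [coeff_eq_zero_of_hc (hg _ hx)]; simp
    · have hy : y.degree < b := by omega
      rw [coeff_eq_zero_of_hc (hh _ hy)]; simp
  · rw [if_neg hd]; simp

lemma hc_mul_bot {g h : MvPolynomial σ R} {a b : ℕ}
    (hg : ∀ j, j < a → homogeneousComponent j g = 0)
    (hh : ∀ j, j < b → homogeneousComponent j h = 0) :
    homogeneousComponent (a + b) (g * h)
      = homogeneousComponent a g * homogeneousComponent b h := by
  classical
  ext d
  rw [coeff_homogeneousComponent]
  by_cases hd : d.degree = a + b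
  · rw [if_pos hd, coeff_mul, coeff_mul]
    refine Finset.sum_congr rfl ?_
    rintro ⟨x, y⟩ hxy
    rw [Finset.HasAntidiagonal.mem_antidiagonal] at hxy
    have hdeg : x.degree + y.degree = a + b := by rw [← degree_add, hxy, hd]
    simp only []
    rw [coeff_homogeneousComponent, coeff_homogeneousComponent]
    by_cases hx : x.degree = a
    · have hy : y.degree = b := by omega
      rw [if_pos hx, if_pos hy]
    · rcases Nat.lt_or_ge x.degree a with hlt | hge
      · rw [coeff_eq_zero_of_hc (hg _ hlt), if_neg hx]
        simp
      · have hy : y.degree < b := by omega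
        rw [coeff_eq_zero_of_hc (hh _ hy), if_neg hx]
        simp
  · rw [if_neg hd]
    exact (((homogeneousComponent_isHomogeneous a g).mul
      (homogeneousComponent_isHomogeneous b h)).coeff_eq_zero hd).symm

lemma hc_totalDegree_ne_zero {p : MvPolynomial σ R} (hp : p ≠ 0) :
    homogeneousComponent p.totalDegree p ≠ 0 := by
  classical
  obtain ⟨d, hd, hdeg⟩ := Finset.exists_mem_eq_sup p.support
    (support_nonempty.2 hp) (fun s => s.sum fun _ e => e)
  have hdd : d.degree = p.totalDegree := by
    rw [MvPolynomial.totalDegree, hdeg]; rfl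
  intro h0
  have : coeff d p = 0 := by
    have := coeff_homogeneousComponent p.totalDegree p d
    rw [if_pos hdd, h0] at this
    simpa using this.symm
  exact (mem_support_iff.1 hd) this

lemma eq_hc_of_support (p : MvPolynomial σ R) (a : ℕ)
    (hlow : ∀ j, j < a → homogeneousComponent j p = 0)
    (htop : p.totalDegree ≤ a) :
    p = homogeneousComponent a p := by
  classical
  conv_lhs => rw [← sum_homogeneousComponent p]
  rcases Nat.lt_or_ge p.totalDegree a with hlt | hge
  · have h0 : ∀ i ∈ Finset.range (p.totalDegree + 1), homogeneousComponent i p = 0 := by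
      intro i hi
      rw [Finset.mem_range] at hi
      exact hlow i (by omega)
    rw [Finset.sum_congr rfl h0, Finset.sum_const_zero]
    exact (homogeneousComponent_eq_zero a p hlt).symm
  · have ha : a = p.totalDegree := by omega
    refine Finset.sum_eq_single a ?_ ?_
    · intro i hi hne
      rw [Finset.mem_range] at hi
      exact hlow i (by omega)
    · intro h
      exfalso
      rw [Finset.mem_range] at h
      omega

end Stmt17Aux

namespace Stmt17Aux
variable {σ : Type*} {R : Type*} [CommRing R]

lemma monomial_one_dvd_iff {s : σ →₀ ℕ} {x : MvPolynomial σ R} :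
    monomial s (1 : R) ∣ x ↔ ∀ d ∈ x.support, s ≤ d := by
  classical
  rw [monomial_one_dvd_iff_modMonomial_eq_zero]
  constructor
  · intro h d hd
    by_contra hle
    have := coeff_modMonomial_of_not_le x hle
    rw [h] at this
    simp only [coeff_zero] at this
    exact (mem_support_iff.1 hd) this.symm
  · intro h
    ext d
    by_cases hle : s ≤ d
    · rw [coeff_modMonomial_of_le x hle, coeff_zero]
    · rw [coeff_modMonomial_of_not_le x hle, coeff_zero]
      by_contra hc
      exact hle (h d (mem_support_iff.2 hc))

lemma X_pow_dvd_iff {i : σ} {n : ℕ} {x : MvPolynomial σ R} :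
    (X i : MvPolynomial σ R) ^ n ∣ x ↔ ∀ d ∈ x.support, n ≤ d i := by
  classical
  rw [X_pow_eq_monomial, monomial_one_dvd_iff]
  constructor
  · intro h d hd
    have := h d hd
    rwa [Finsupp.single_le_iff] at this
  · intro h d hd
    rw [Finsupp.single_le_iff]
    exact h d hd

lemma X_dvd_iff' {i : σ} {x : MvPolynomial σ R} :
    (X i : MvPolynomial σ R) ∣ x ↔ ∀ d ∈ x.support, 1 ≤ d i := by
  have := X_pow_dvd_iff (i := i) (n := 1) (x := x)
  rwa [pow_one] at this

/-- units have total degree zero, over a domain -/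
lemma totalDegree_eq_zero_of_isUnit [IsDomain R] {p : MvPolynomial σ R} (h : IsUnit p) :
    p.totalDegree = 0 := by
  obtain ⟨q, hq⟩ := h.exists_right_inv
  have hp : p ≠ 0 := by
    intro h0; rw [h0, zero_mul] at hq; exact one_ne_zero hq.symm
  have hqne : q ≠ 0 := by
    intro h0; rw [h0, mul_zero] at hq; exact one_ne_zero hq.symm
  by_contra hne
  have hkey := hc_mul_top (g := p) (h := q)
    (a := p.totalDegree) (b := q.totalDegree)
    (fun j hj => homogeneousComponent_eq_zero j p hj)
    (fun j hj => homogeneousComponent_eq_zero j q hj)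
  rw [hq] at hkey
  have h1 : homogeneousComponent (p.totalDegree + q.totalDegree) (1 : MvPolynomial σ R) = 0 := by
    apply homogeneousComponent_eq_zero
    rw [totalDegree_one]
    omega
  rw [h1] at hkey
  exact (mul_ne_zero (hc_totalDegree_ne_zero hp) (hc_totalDegree_ne_zero hqne)) hkey.symm

/-- factors of nonzero homogeneous polynomials over a domain are homogeneous -/
lemma factor_isHomogeneous [IsDomain R] {p q : MvPolynomial σ R} {n : ℕ}
    (hp : p ≠ 0) (hq : q ≠ 0) (h : (p * q).IsHomogeneous n) :
    p.IsHomogeneous p.totalDegree ∧ q.IsHomogeneous q.totalDegree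
      ∧ p.totalDegree + q.totalDegree = n := by
  classical
  have hpq : p * q ≠ 0 := mul_ne_zero hp hq
  -- the bottom nonzero components
  have hex : ∀ r : MvPolynomial σ R, r ≠ 0 → ∃ j, homogeneousComponent j r ≠ 0 := by
    intro r hr
    by_contra hc
    push_neg at hc
    apply hr
    rw [← sum_homogeneousComponent r]
    exact Finset.sum_eq_zero fun i _ => hc i
  set bp := Nat.find (hex p hp) with hbp
  set bq := Nat.find (hex q hq) with hbq
  have hbp_ne : homogeneousComponent bp p ≠ 0 := Nat.find_spec (hex p hp)
  have hbq_ne : homogeneousComponent bq q ≠ 0 := Nat.find_spec (hex q hq)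
  have hbp_low : ∀ j, j < bp → homogeneousComponent j p = 0 := by
    intro j hj
    by_contra hc
    exact Nat.find_min (hex p hp) hj hc
  have hbq_low : ∀ j, j < bq → homogeneousComponent j q = 0 := by
    intro j hj
    by_contra hc
    exact Nat.find_min (hex q hq) hj hc
  -- top equality
  have htop := hc_mul_top (g := p) (h := q)
    (a := p.totalDegree) (b := q.totalDegree)
    (fun j hj => homogeneousComponent_eq_zero j p hj)
    (fun j hj => homogeneousComponent_eq_zero j q hj)
  have htop_ne : homogeneousComponent (p.totalDegree + q.totalDegree) (p * q) ≠ 0 := by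
    rw [htop]
    exact mul_ne_zero (hc_totalDegree_ne_zero hp) (hc_totalDegree_ne_zero hq)
  have hmem : (p * q) ∈ homogeneousSubmodule σ R n := (mem_homogeneousSubmodule n (p*q)).2 h
  have hcomp : ∀ j, j ≠ n → homogeneousComponent j (p * q) = 0 := by
    intro j hj
    rw [homogeneousComponent_of_mem hmem, if_neg hj]
  have htop_eq : p.totalDegree + q.totalDegree = n := by
    by_contra hc
    exact htop_ne (hcomp _ hc)
  -- bottom equality
  have hbot := hc_mul_bot hbp_low hbq_low
  have hbot_ne : homogeneousComponent (bp + bq) (p * q) ≠ 0 := by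
    rw [hbot]
    exact mul_ne_zero hbp_ne hbq_ne
  have hbot_eq : bp + bq = n := by
    by_contra hc
    exact hbot_ne (hcomp _ hc)
  have hp_le : bp ≤ p.totalDegree := by
    by_contra hc
    exact hbp_ne (homogeneousComponent_eq_zero bp p (by omega))
  have hq_le : bq ≤ q.totalDegree := by
    by_contra hc
    exact hbq_ne (homogeneousComponent_eq_zero bq q (by omega))
  have hpb : bp = p.totalDegree := by omega
  have hqb : bq = q.totalDegree := by omega
  have hp_eq : p = homogeneousComponent p.totalDegree p :=
    eq_hc_of_support p p.totalDegree (fun j hj => hbp_low j (by omega)) le_rfl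
  have hq_eq : q = homogeneousComponent q.totalDegree q :=
    eq_hc_of_support q q.totalDegree (fun j hj => hbq_low j (by omega)) le_rfl
  refine ⟨?_, ?_, htop_eq⟩
  · nth_rewrite 1 [hp_eq]; exact homogeneousComponent_isHomogeneous _ _
  · nth_rewrite 1 [hq_eq]; exact homogeneousComponent_isHomogeneous _ _

/-- map commutes with homogeneous components -/
lemma hc_map {S : Type*} [CommRing S] (φ : R →+* S) (p : MvPolynomial σ R) (n : ℕ) :
    homogeneousComponent n (MvPolynomial.map φ p) = MvPolynomial.map φ (homogeneousComponent n p) := by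
  classical
  ext d
  rw [coeff_homogeneousComponent, coeff_map, coeff_map, coeff_homogeneousComponent]
  split_ifs <;> simp

end Stmt17Aux

namespace Stmt17Aux
variable {R : Type*} [CommRing R]

lemma fin2_degree (d : Fin 2 →₀ ℕ) : d.degree = d 0 + d 1 := by
  classical
  rw [Finsupp.degree_apply, Finset.sum_subset (Finset.subset_univ d.support)]
  · exact Fin.sum_univ_two d
  · intro i _ hi
    exact Finsupp.notMem_support_iff.1 hi

lemma fin3_degree (d : Fin 3 →₀ ℕ) : d.degree = d 0 + d 1 + d 2 := by
  classical
  rw [Finsupp.degree_apply, Finset.sum_subset (Finset.subset_univ d.support)]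
  · exact Fin.sum_univ_three d
  · intro i _ hi
    exact Finsupp.notMem_support_iff.1 hi

lemma fin2_ext {d e : Fin 2 →₀ ℕ} (h0 : d 0 = e 0) (h1 : d 1 = e 1) : d = e := by
  ext a
  fin_cases a
  · exact h0
  · exact h1

lemma fin3_ext {d e : Fin 3 →₀ ℕ} (h0 : d 0 = e 0) (h1 : d 1 = e 1) (h2 : d 2 = e 2) : d = e := by
  ext a
  fin_cases a
  · exact h0
  · exact h1
  · exact h2

lemma single0_add_single1_apply0 (a b : ℕ) :
    (Finsupp.single (0 : Fin 2) a + Finsupp.single (1 : Fin 2) b) 0 = a := by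
  simp [Finsupp.single_apply]

lemma single0_add_single1_apply1 (a b : ℕ) :
    (Finsupp.single (0 : Fin 2) a + Finsupp.single (1 : Fin 2) b) 1 = b := by
  simp [Finsupp.single_apply]

/-- dehomogenization at the point (0,0,1) -/
def dehom (R : Type*) [CommRing R] : MvPolynomial (Fin 3) R →ₐ[R] MvPolynomial (Fin 2) R :=
  aeval (![X 0, X 1, 1] : Fin 3 → MvPolynomial (Fin 2) R)

lemma dehom_apply (G : MvPolynomial (Fin 3) R) :
    dehom R G = ∑ b ∈ G.support,
      monomial (Finsupp.single 0 (b 0) + Finsupp.single 1 (b 1)) (coeff b G) := by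
  classical
  rw [dehom]
  conv_lhs => rw [as_sum G]
  rw [map_sum]
  refine Finset.sum_congr rfl ?_
  intro b _
  rw [aeval_monomial, Finsupp.prod_fintype _ _ (fun i => pow_zero _), Fin.prod_univ_three]
  simp only [Matrix.cons_val_zero, Matrix.cons_val_one, Matrix.head_cons,
    Matrix.cons_val_two, Matrix.tail_cons, one_pow, mul_one]
  rw [X_pow_eq_monomial, X_pow_eq_monomial, monomial_mul, mul_one]
  rw [algebraMap_eq, C_mul_monomial, mul_one]

lemma dehom_coeff (G : MvPolynomial (Fin 3) R) (d : Fin 2 →₀ ℕ) :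
    coeff d (dehom R G)
      = ∑ b ∈ G.support, if Finsupp.single 0 (b 0) + Finsupp.single 1 (b 1) = d
          then coeff b G else 0 := by
  classical
  rw [dehom_apply G, MvPolynomial.coeff_sum]
  refine Finset.sum_congr rfl ?_
  intro b _
  rw [coeff_monomial]

end Stmt17Aux

namespace Stmt17Aux
variable {σ : Type*} {R : Type*} [CommRing R]

lemma support_degree_eq {G : MvPolynomial σ R} {n : ℕ} (hG : G.IsHomogeneous n)
    {b : σ →₀ ℕ} (hb : b ∈ G.support) : b.degree = n := by
  by_contra hne
  exact (mem_support_iff.1 hb) (hG.coeff_eq_zero hne)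

lemma dehom_totalDegree_le {G : MvPolynomial (Fin 3) R} {n : ℕ} (hG : G.IsHomogeneous n) :
    (dehom R G).totalDegree ≤ n := by
  classical
  rw [MvPolynomial.totalDegree]
  apply Finset.sup_le
  intro d hd
  have hne := mem_support_iff.1 hd
  rw [dehom_coeff] at hne
  obtain ⟨b, hb, hbne⟩ := Finset.exists_ne_zero_of_sum_ne_zero hne
  have hcond : (Finsupp.single (0 : Fin 2) (b 0) + Finsupp.single (1 : Fin 2) (b 1)) = d := by
    by_contra hc
    rw [if_neg hc] at hbne
    exact hbne rfl
  have hdeg := support_degree_eq hG hb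
  rw [fin3_degree] at hdeg
  have hdd : d.degree = b 0 + b 1 := by
    rw [← hcond, fin2_degree, single0_add_single1_apply0, single0_add_single1_apply1]
  have hsum : (d.sum fun _ e => e) = d.degree := rfl
  omega

lemma dehom_coeff_homog {G : MvPolynomial (Fin 3) R} {n : ℕ} (hG : G.IsHomogeneous n)
    (b : Fin 3 →₀ ℕ) (hb : b.degree = n) :
    coeff (Finsupp.single 0 (b 0) + Finsupp.single 1 (b 1)) (dehom R G) = coeff b G := by
  classical
  rw [dehom_coeff]
  rw [Finset.sum_eq_single b]
  · rw [if_pos rfl]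
  · intro b' hb' hne
    by_cases heq : (Finsupp.single (0 : Fin 2) (b' 0) + Finsupp.single (1 : Fin 2) (b' 1))
        = Finsupp.single 0 (b 0) + Finsupp.single 1 (b 1)
    · exfalso
      have h0 : b' 0 = b 0 := by
        have := congrArg (fun v => v 0) heq
        simpa [single0_add_single1_apply0] using this
      have h1 : b' 1 = b 1 := by
        have := congrArg (fun v => v 1) heq
        simpa [single0_add_single1_apply1] using this
      have hd1 := support_degree_eq hG hb'
      rw [fin3_degree] at hd1
      rw [fin3_degree] at hb
      have h2 : b' 2 = b 2 := by omega
      exact hne (fin3_ext h0 h1 h2)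
    · rw [if_neg heq]
  · intro hbs
    rw [if_pos rfl]
    exact notMem_support_iff.1 hbs

lemma dehom_inj_homog {G G' : MvPolynomial (Fin 3) R} {n : ℕ}
    (hG : G.IsHomogeneous n) (hG' : G'.IsHomogeneous n)
    (h : dehom R G = dehom R G') : G = G' := by
  ext b
  by_cases hb : b.degree = n
  · rw [← dehom_coeff_homog hG b hb, ← dehom_coeff_homog hG' b hb, h]
  · rw [hG.coeff_eq_zero hb, hG'.coeff_eq_zero hb]

lemma dehom_rename (p : MvPolynomial (Fin 2) R) :
    dehom R (rename Fin.castSucc p) = p := by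
  rw [dehom, aeval_rename]
  have hv : ((![X 0, X 1, 1] : Fin 3 → MvPolynomial (Fin 2) R) ∘ Fin.castSucc) = X := by
    funext i
    fin_cases i <;> rfl
  rw [hv, aeval_X_left_apply]

lemma aeval_X0_coeff (p : MvPolynomial (Fin 2) R) (j : ℕ) :
    (aeval (![Polynomial.X, 0] : Fin 2 → Polynomial R) p).coeff j
      = coeff (Finsupp.single 0 j) p := by
  classical
  conv_lhs => rw [as_sum p]
  rw [map_sum, Polynomial.finset_sum_coeff]
  have hterm : ∀ d : Fin 2 →₀ ℕ, ∀ c : R,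
      (aeval (![Polynomial.X, 0] : Fin 2 → Polynomial R) (monomial d c)).coeff j
        = if d = Finsupp.single 0 j then c else 0 := by
    intro d c
    rw [aeval_monomial, Finsupp.prod_fintype _ _ (fun i => pow_zero _), Fin.prod_univ_two]
    simp only [Matrix.cons_val_zero, Matrix.cons_val_one, Matrix.head_cons]
    by_cases h1 : d 1 = 0
    · rw [h1, pow_zero, mul_one]
      have : algebraMap R (Polynomial R) c = Polynomial.C c := rfl
      rw [this, Polynomial.coeff_C_mul, Polynomial.coeff_X_pow]
      by_cases h0 : d 0 = j
      · rw [if_pos h0.symm, mul_one, if_pos]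
        exact fin2_ext (by simp [h0, Finsupp.single_apply]) (by simp [h1, Finsupp.single_apply])
      · rw [if_neg (fun hc => h0 hc.symm), mul_zero, if_neg]
        intro hc
        apply h0
        rw [hc]
        simp [Finsupp.single_apply]
    · rw [zero_pow h1, mul_zero, mul_zero, Polynomial.coeff_zero, if_neg]
      intro hc
      apply h1
      rw [hc]
      simp [Finsupp.single_apply]
  rw [Finset.sum_eq_single (Finsupp.single (0 : Fin 2) j)]
  · rw [hterm, if_pos rfl]
  · intro d hd hne
    rw [hterm, if_neg hne]
  · intro hns
    rw [hterm, if_pos rfl]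
    exact notMem_support_iff.1 hns

lemma aeval_X1_coeff_top {p : MvPolynomial (Fin 2) R} {n : ℕ} (hp : p.IsHomogeneous n) :
    (aeval (![Polynomial.X, 1] : Fin 2 → Polynomial R) p).coeff n
      = coeff (Finsupp.single 0 n) p := by
  classical
  conv_lhs => rw [as_sum p]
  rw [map_sum, Polynomial.finset_sum_coeff]
  have hterm : ∀ d : Fin 2 →₀ ℕ, ∀ c : R,
      (aeval (![Polynomial.X, 1] : Fin 2 → Polynomial R) (monomial d c)).coeff n
        = if d 0 = n then c else 0 := by
    intro d c
    rw [aeval_monomial, Finsupp.prod_fintype _ _ (fun i => pow_zero _), Fin.prod_univ_two]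
    simp only [Matrix.cons_val_zero, Matrix.cons_val_one, Matrix.head_cons, one_pow, mul_one]
    have : algebraMap R (Polynomial R) c = Polynomial.C c := rfl
    rw [this, Polynomial.coeff_C_mul, Polynomial.coeff_X_pow]
    by_cases h0 : d 0 = n
    · rw [if_pos h0, if_pos h0.symm, mul_one]
    · rw [if_neg h0, if_neg (fun hc => h0 hc.symm), mul_zero]
  rw [Finset.sum_eq_single (Finsupp.single (0 : Fin 2) n)]
  · rw [hterm, if_pos (by simp [Finsupp.single_apply])]
  · intro d hd hne
    rw [hterm]
    by_cases h0 : d 0 = n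
    · exfalso
      have hdeg := support_degree_eq hp hd
      rw [fin2_degree] at hdeg
      have h1 : d 1 = 0 := by omega
      exact hne (fin2_ext (by simp [h0, Finsupp.single_apply]) (by simp [h1, Finsupp.single_apply]))
    · rw [if_neg h0]
  · intro hns
    rw [hterm, if_pos (by simp [Finsupp.single_apply])]
    exact notMem_support_iff.1 hns

end Stmt17Aux

namespace Stmt17Aux
variable {R : Type*} [CommRing R]

lemma dehom_map {S : Type*} [CommRing S] (φ : R →+* S) (G : MvPolynomial (Fin 3) R) :
    dehom S (MvPolynomial.map φ G) = MvPolynomial.map φ (dehom R G) := by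
  have h : ((dehom S : MvPolynomial (Fin 3) S →ₐ[S] MvPolynomial (Fin 2) S) :
        MvPolynomial (Fin 3) S →+* MvPolynomial (Fin 2) S).comp (MvPolynomial.map φ)
      = (MvPolynomial.map φ).comp
        ((dehom R : MvPolynomial (Fin 3) R →ₐ[R] MvPolynomial (Fin 2) R) :
          MvPolynomial (Fin 3) R →+* MvPolynomial (Fin 2) R) := by
    apply ringHom_ext
    · intro r
      simp [dehom]
    · intro i
      fin_cases i <;> simp [dehom]
  exact DFunLike.congr_fun h G

lemma aevalX0_map {S : Type*} [CommRing S] (φ : R →+* S) (p : MvPolynomial (Fin 2) R) :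
    aeval (![Polynomial.X, 0] : Fin 2 → Polynomial S) (MvPolynomial.map φ p)
      = Polynomial.map φ (aeval (![Polynomial.X, 0] : Fin 2 → Polynomial R) p) := by
  have h : ((aeval (![Polynomial.X, 0] : Fin 2 → Polynomial S) :
        MvPolynomial (Fin 2) S →ₐ[S] Polynomial S) :
        MvPolynomial (Fin 2) S →+* Polynomial S).comp (MvPolynomial.map φ)
      = (Polynomial.mapRingHom φ).comp
        ((aeval (![Polynomial.X, 0] : Fin 2 → Polynomial R) :
          MvPolynomial (Fin 2) R →ₐ[R] Polynomial R) :
          MvPolynomial (Fin 2) R →+* Polynomial R) := by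
    apply ringHom_ext
    · intro r
      simp
    · intro i
      fin_cases i <;> simp
  exact DFunLike.congr_fun h p

lemma eval_finSuccEquiv_eval (r : R) (p : MvPolynomial (Fin 2) R) (v : Fin 1 → R) :
    eval v (Polynomial.eval (C r * X 0) ((MvPolynomial.finSuccEquiv R 1) p))
      = eval ![r * v 0, v 0] p := by
  have h : (((eval v : MvPolynomial (Fin 1) R →+* R).comp
        (Polynomial.evalRingHom (C r * X 0))).comp
        ((MvPolynomial.finSuccEquiv R 1 :
          MvPolynomial (Fin 2) R ≃ₐ[R] Polynomial (MvPolynomial (Fin 1) R)) :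
          MvPolynomial (Fin 2) R →+* Polynomial (MvPolynomial (Fin 1) R)))
      = (eval ![r * v 0, v 0] : MvPolynomial (Fin 2) R →+* R) := by
    apply ringHom_ext
    · intro a
      simp [finSuccEquiv_apply]
    · intro i
      refine Fin.cases ?_ ?_ i
      · simp [finSuccEquiv_X_zero]
      · intro j
        have hj : j = 0 := Fin.eq_zero j
        subst hj
        have h2 := finSuccEquiv_X_succ (R := R) (n := 1) (j := 0)
        simp only [RingHom.coe_comp, Function.comp_apply, RingHom.coe_coe]
        rw [h2]
        simp [Fin.succ_zero_eq_one]
  exact DFunLike.congr_fun h p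

lemma eval_scale {p : MvPolynomial (Fin 2) R} {n : ℕ} (hp : p.IsHomogeneous n) (t a b : R) :
    eval ![t * a, t * b] p = t ^ n * eval ![a, b] p := by
  rw [eval_eq', eval_eq', Finset.mul_sum]
  refine Finset.sum_congr rfl fun d hd => ?_
  have hdeg := support_degree_eq hp hd
  rw [fin2_degree] at hdeg
  rw [Fin.prod_univ_two, Fin.prod_univ_two]
  simp only [Matrix.cons_val_zero, Matrix.cons_val_one, Matrix.head_cons]
  rw [mul_pow, mul_pow, ← hdeg, pow_add]
  ring

lemma sub_dvd_of_root {K : Type*} [Field K] [Infinite K]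
    {p : MvPolynomial (Fin 2) K} {n : ℕ} (hp : p.IsHomogeneous n) {r : K}
    (hroot : eval ![r, 1] p = 0) :
    (X 0 - C r * X 1 : MvPolynomial (Fin 2) K) ∣ p := by
  have hQ : Polynomial.eval (C r * X 0) ((MvPolynomial.finSuccEquiv K 1) p) = 0 := by
    apply MvPolynomial.funext (q := 0)
    intro v
    rw [eval_finSuccEquiv_eval, map_zero]
    have h1 : (![r * v 0, v 0] : Fin 2 → K) = ![v 0 * r, v 0 * 1] := by
      funext i
      fin_cases i <;> simp [mul_comm]
    rw [h1, eval_scale hp, hroot, mul_zero]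
  have hdvd : (Polynomial.X - Polynomial.C (C r * X 0)) ∣ (MvPolynomial.finSuccEquiv K 1) p :=
    Polynomial.dvd_iff_isRoot.2 hQ
  have hmap := map_dvd (MvPolynomial.finSuccEquiv K 1).symm hdvd
  rw [AlgEquiv.symm_apply_apply] at hmap
  have hCr : (MvPolynomial.finSuccEquiv K 1) (C r * X 1) = Polynomial.C (C r * X 0) := by
    have hm := map_mul (MvPolynomial.finSuccEquiv K 1) (C r) (X 1)
    rw [hm]
    have h2 : (MvPolynomial.finSuccEquiv K 1) (C r) = Polynomial.C (C r) := by
      simp [finSuccEquiv_apply]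
    have h1 : (X 1 : MvPolynomial (Fin 2) K) = X (Fin.succ 0) := rfl
    rw [h2, h1, finSuccEquiv_X_succ, ← Polynomial.C_mul]
  have heq : (MvPolynomial.finSuccEquiv K 1).symm (Polynomial.X - Polynomial.C (C r * X 0))
      = (X 0 - C r * X 1 : MvPolynomial (Fin 2) K) := by
    apply (MvPolynomial.finSuccEquiv K 1).injective
    rw [AlgEquiv.apply_symm_apply, map_sub, hCr, finSuccEquiv_X_zero]
  rwa [heq] at hmap

end Stmt17Aux

namespace Stmt17Aux
variable {R : Type*} [CommRing R]

lemma degree_single0 (j : ℕ) : (Finsupp.single (0 : Fin 2) j).degree = j := by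
  rw [fin2_degree]
  simp [Finsupp.single_apply]

lemma eval_aevalX1 (r : R) (p : MvPolynomial (Fin 2) R) :
    Polynomial.eval r (aeval (![Polynomial.X, 1] : Fin 2 → Polynomial R) p)
      = eval ![r, 1] p := by
  have h : ((Polynomial.evalRingHom r).comp
        ((aeval (![Polynomial.X, 1] : Fin 2 → Polynomial R) :
          MvPolynomial (Fin 2) R →ₐ[R] Polynomial R) :
          MvPolynomial (Fin 2) R →+* Polynomial R))
      = (eval ![r, 1] : MvPolynomial (Fin 2) R →+* R) := by
    apply ringHom_ext
    · intro a
      simp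
    · intro i
      fin_cases i <;> simp
  exact DFunLike.congr_fun h p

lemma key {K : Type*} [Field K] [IsAlgClosed K] [Infinite K] {k : ℕ}
    {F' G H : MvPolynomial (Fin 3) K} (hF'ne : F' ≠ 0) (hF' : F'.IsHomogeneous k)
    (hGH : F' = G * H) {c : K} (hc : c ≠ 0)
    (hii : aeval (![Polynomial.X, 0] : Fin 2 → Polynomial K) (dehom K F')
      = Polynomial.C c * Polynomial.X ^ k)
    (hiii : ∀ L : MvPolynomial (Fin 3) K, L ≠ 0 → L.IsHomogeneous 1 →
      eval ![0, 0, 1] L = 0 → ¬ L ∣ F')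
    {bh : ℕ} (hbh_low : ∀ j, j < bh → homogeneousComponent j (dehom K H) = 0)
    (hndvd : coeff (Finsupp.single 0 bh) (dehom K H) ≠ 0) :
    IsUnit H := by
  classical
  have hGne : G ≠ 0 := by
    intro h0; rw [h0, zero_mul] at hGH; exact hF'ne hGH
  have hHne : H ≠ 0 := by
    intro h0; rw [h0, mul_zero] at hGH; exact hF'ne hGH
  obtain ⟨hGhom, hHhom, hdsum⟩ := factor_isHomogeneous hGne hHne (hGH ▸ hF')
  set dG := G.totalDegree with hdG
  set dH := H.totalDegree with hdH
  set g : MvPolynomial (Fin 2) K := dehom K G with hgdef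
  set h : MvPolynomial (Fin 2) K := dehom K H with hhdef
  set g0 : Polynomial K := aeval (![Polynomial.X, 0] : Fin 2 → Polynomial K) g with hg0def
  set h0 : Polynomial K := aeval (![Polynomial.X, 0] : Fin 2 → Polynomial K) h with hh0def
  have hg0h0 : g0 * h0 = Polynomial.C c * Polynomial.X ^ k := by
    rw [hg0def, hh0def, ← map_mul, hgdef, hhdef, ← map_mul, ← hGH]
    exact hii
  -- h0 divides X ^ k
  have hCcu : IsUnit (Polynomial.C c) := Polynomial.isUnit_C.2 (isUnit_iff_ne_zero.2 hc)
  have hXk : (Polynomial.X : Polynomial K) ^ k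
      = Polynomial.C c⁻¹ * (Polynomial.C c * Polynomial.X ^ k) := by
    rw [← mul_assoc, ← Polynomial.C_mul, inv_mul_cancel₀ hc, Polynomial.C_1, one_mul]
  have hh0dvd : h0 ∣ (Polynomial.X : Polynomial K) ^ k := by
    rw [hXk, ← hg0h0]
    exact Dvd.dvd.mul_left (Dvd.intro_left g0 rfl) _
  obtain ⟨q0, hq0k, hassoc⟩ := (dvd_prime_pow Polynomial.prime_X k).1 hh0dvd
  obtain ⟨u, hu⟩ := hassoc
  obtain ⟨b, hbu, hbC⟩ := Polynomial.isUnit_iff.1 u.isUnit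
  have hbne : b ≠ 0 := hbu.ne_zero
  have hrep : h0 = Polynomial.C b⁻¹ * Polynomial.X ^ q0 := by
    have h1 : h0 * Polynomial.C b = Polynomial.X ^ q0 := by rw [hbC, hu]
    calc h0 = h0 * (Polynomial.C b * Polynomial.C b⁻¹) := by
              rw [← Polynomial.C_mul, mul_inv_cancel₀ hbne, Polynomial.C_1, mul_one]
      _ = h0 * Polynomial.C b * Polynomial.C b⁻¹ := by ring
      _ = Polynomial.X ^ q0 * Polynomial.C b⁻¹ := by rw [h1]
      _ = Polynomial.C b⁻¹ * Polynomial.X ^ q0 := by ring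
  -- coefficients of h0 pick out coefficients of h on the X-axis
  have hcoeff : ∀ j : ℕ, h0.coeff j = coeff (Finsupp.single 0 j) h := fun j =>
    aeval_X0_coeff h j
  -- bh = q0
  have hbhq0 : bh = q0 := by
    have h1 : h0.coeff bh ≠ 0 := by rw [hcoeff]; exact hndvd
    by_contra hne
    rw [hrep, Polynomial.coeff_C_mul, Polynomial.coeff_X_pow, if_neg hne,
      mul_zero] at h1
    exact h1 rfl
  -- degree bounds
  have hg0ne : g0 ≠ 0 := by
    intro h0'
    rw [h0', zero_mul] at hg0h0
    have := congrArg (fun p => Polynomial.coeff p k) hg0h0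
    simp at this
    exact hc this.symm
  have hh0ne : h0 ≠ 0 := by
    intro h0'
    have h1 : h0.coeff bh ≠ 0 := by rw [hcoeff]; exact hndvd
    rw [h0'] at h1
    simp at h1
  have hndeg : g0.natDegree + h0.natDegree = k := by
    rw [← Polynomial.natDegree_mul hg0ne hh0ne, hg0h0]
    exact Polynomial.natDegree_C_mul_X_pow k c hc
  have hh0deg : h0.natDegree = q0 := by
    rw [hrep]
    exact Polynomial.natDegree_C_mul_X_pow q0 b⁻¹ (inv_ne_zero hbne)
  have hg0deg : g0.natDegree ≤ dG := by
    rw [Polynomial.natDegree_le_iff_coeff_eq_zero]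
    intro N hN
    rw [hg0def, aeval_X0_coeff]
    have htd : g.totalDegree ≤ dG := dehom_totalDegree_le hGhom
    apply coeff_eq_zero_of_totalDegree_lt
    have : (Finsupp.single (0 : Fin 2) N).degree = N := degree_single0 N
    rw [show (∑ i ∈ (Finsupp.single (0 : Fin 2) N).support,
      (Finsupp.single (0 : Fin 2) N) i) = (Finsupp.single (0 : Fin 2) N).degree from rfl, this]
    omega
  -- totalDegree h ≤ dH and bh ≤ totalDegree h
  have htdh : h.totalDegree ≤ dH := dehom_totalDegree_le hHhom
  have hcompne : homogeneousComponent bh h ≠ 0 := by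
    intro h0'
    apply hndvd
    have := coeff_homogeneousComponent bh h (Finsupp.single 0 bh)
    rw [if_pos (degree_single0 bh), h0'] at this
    simpa using this.symm
  have hbhle : bh ≤ h.totalDegree := by
    by_contra hlt
    exact hcompne (homogeneousComponent_eq_zero bh h (by omega))
  -- conclude bh = dH
  have hq0dH : bh = dH := by omega
  -- case dH = 0 : H is a unit
  rcases Nat.eq_zero_or_pos dH with hdH0 | hdH1
  · have hH0 : H = homogeneousComponent 0 H :=
      eq_hc_of_support H 0 (fun j hj => by omega) (by omega)
    rw [homogeneousComponent_zero] at hH0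
    have hc0 : coeff 0 H ≠ 0 := by
      intro h0'
      rw [h0', map_zero] at hH0
      exact hHne hH0
    rw [hH0]
    exact (isUnit_iff_exists_inv).2 ⟨C (coeff 0 H)⁻¹, by
      rw [← C_mul, mul_inv_cancel₀ hc0, C_1]⟩
  -- case dH ≥ 1 : derive a contradiction using (iii)
  · exfalso
    have hheq : h = homogeneousComponent bh h :=
      eq_hc_of_support h bh hbh_low (by omega)
    have hhhom : h.IsHomogeneous dH := by
      rw [hheq, ← hq0dH]
      exact homogeneousComponent_isHomogeneous bh h
    -- H is the embedding of h
    have hHeq : H = rename Fin.castSucc h := by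
      apply dehom_inj_homog hHhom (hhhom.rename_isHomogeneous)
      rw [dehom_rename]
    -- find a root of h(T,1)
    set q1 : Polynomial K := aeval (![Polynomial.X, 1] : Fin 2 → Polynomial K) h with hq1def
    have hq1coeff : q1.coeff dH ≠ 0 := by
      rw [hq1def, aeval_X1_coeff_top hhhom, ← hq0dH]
      exact hndvd
    have hq1deg : q1.degree ≠ 0 := by
      intro h0'
      have h1 : (dH : WithBot ℕ) ≤ q1.degree := Polynomial.le_degree_of_ne_zero hq1coeff
      rw [h0'] at h1
      have : dH = 0 := by exact_mod_cast le_antisymm (by exact_mod_cast h1) (Nat.zero_le dH)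
      omega
    obtain ⟨r, hr⟩ := IsAlgClosed.exists_root q1 hq1deg
    have hroot : eval ![r, 1] h = 0 := by
      rw [← eval_aevalX1 r h]
      exact hr
    have hdvd2 : (X 0 - C r * X 1 : MvPolynomial (Fin 2) K) ∣ h :=
      sub_dvd_of_root hhhom hroot
    set L : MvPolynomial (Fin 3) K := rename Fin.castSucc (X 0 - C r * X 1 : MvPolynomial (Fin 2) K)
      with hLdef
    have hLdvd : L ∣ F' := by
      refine dvd_trans ?_ (Dvd.intro_left G hGH.symm)
      rw [hHeq]
      exact map_dvd (rename Fin.castSucc) hdvd2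
    have hLhom : L.IsHomogeneous 1 := by
      apply MvPolynomial.IsHomogeneous.rename_isHomogeneous
      exact (isHomogeneous_X K 0).sub (isHomogeneous_C_mul_X r 1)
    have hLne : L ≠ 0 := by
      intro h0'
      have h1 : eval (![1, 0, 0] : Fin 3 → K) L = 1 := by
        rw [hLdef, eval_rename]
        have : ((![1, 0, 0] : Fin 3 → K) ∘ Fin.castSucc) = ![1, 0] := by
          funext i
          fin_cases i <;> rfl
        rw [this]
        simp
      rw [h0', map_zero] at h1
      exact zero_ne_one h1
    have hLeval : eval (![0, 0, 1] : Fin 3 → K) L = 0 := by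
      rw [hLdef, eval_rename]
      have : ((![0, 0, 1] : Fin 3 → K) ∘ Fin.castSucc) = ![0, 0] := by
        funext i
        fin_cases i <;> rfl
      rw [this]
      simp
    exact hiii L hLne hLhom hLeval hLdvd

end Stmt17Aux

namespace Stmt17Aux

lemma exists_hc_ne_zero {σ : Type*} {R : Type*} [CommRing R] {p : MvPolynomial σ R}
    (hp : p ≠ 0) : ∃ j, homogeneousComponent j p ≠ 0 := by
  by_contra hc
  push_neg at hc
  apply hp
  rw [← sum_homogeneousComponent p]
  exact Finset.sum_eq_zero fun i _ => hc i

lemma X1_dvd_of_coeff_zero {R : Type*} [CommRing R] {p : MvPolynomial (Fin 2) R} {n : ℕ}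
    (hz : coeff (Finsupp.single 0 n) p = 0) :
    (X 1 : MvPolynomial (Fin 2) R) ∣ homogeneousComponent n p := by
  classical
  rw [X_dvd_iff']
  intro d hd
  have hdc := mem_support_iff.1 hd
  rw [coeff_homogeneousComponent] at hdc
  by_cases hdeg : d.degree = n
  · rw [if_pos hdeg] at hdc
    by_contra h1
    push_neg at h1
    have hd1 : d 1 = 0 := by omega
    have hd0 : d 0 = n := by
      rw [fin2_degree] at hdeg
      omega
    have hde : d = Finsupp.single 0 n :=
      fin2_ext (by simp [hd0, Finsupp.single_apply]) (by simp [hd1, Finsupp.single_apply])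
    exact hdc (hde ▸ hz)
  · rw [if_neg hdeg] at hdc
    exact absurd rfl hdc

end Stmt17Aux

open Stmt17Aux in
theorem stmt17' (E : Type*) [Field E] (k : ℕ) (hk : 2 ≤ k)
    (F : MvPolynomial (Fin 3) E) (hF : F.IsHomogeneous k)
    (f : MvPolynomial (Fin 2) E)
    (hf : f = aeval ![X 0, X 1, 1] F)
    (m : ℕ) (hm : 1 ≤ m)
    (hmne : homogeneousComponent m f ≠ 0)
    (hlow : ∀ j < m, homogeneousComponent j f = 0)
    (hi : X 1 ∣ homogeneousComponent m f ∧ ¬ X 1 ^ 2 ∣ homogeneousComponent m f)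
    (hii : ∃ c : E, c ≠ 0 ∧
      aeval ![Polynomial.X, (0 : Polynomial E)] f = Polynomial.C c * Polynomial.X ^ k)
    (hiii : ∀ L : MvPolynomial (Fin 3) (AlgebraicClosure E), L ≠ 0 → L.IsHomogeneous 1 →
      eval ![0, 0, 1] L = 0 →
      ¬ L ∣ MvPolynomial.map (algebraMap E (AlgebraicClosure E)) F) :
    Irreducible (MvPolynomial.map (algebraMap E (AlgebraicClosure E)) F) := by
  classical
  set K := AlgebraicClosure E with hKdef
  set φ := algebraMap E K with hφdef
  have hφinj : Function.Injective φ := φ.injective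
  set F' := MvPolynomial.map φ F with hF'def
  have hF' : F'.IsHomogeneous k := hF.map φ
  have hfd : f = dehom E F := hf
  have hfne : f ≠ 0 := by
    intro h0
    apply hmne
    rw [h0, map_zero]
  have hFne : F ≠ 0 := by
    intro h0
    apply hfne
    rw [hfd, h0, map_zero]
  have hF'ne : F' ≠ 0 := by
    intro h0
    exact hFne (MvPolynomial.map_injective φ hφinj (by rw [← hF'def, h0, map_zero]))
  set f' := MvPolynomial.map φ f with hf'def
  have hf'd : f' = dehom K F' := by
    rw [hf'def, hfd, hF'def, dehom_map]
  have hcomp : ∀ j, homogeneousComponent j f'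
      = MvPolynomial.map φ (homogeneousComponent j f) := fun j => hc_map φ f j
  have hmne' : homogeneousComponent m f' ≠ 0 := by
    rw [hcomp]
    intro h0
    exact hmne (MvPolynomial.map_injective φ hφinj (by rw [h0, map_zero]))
  have hlow' : ∀ j, j < m → homogeneousComponent j f' = 0 := fun j hj => by
    rw [hcomp, hlow j hj, map_zero]
  obtain ⟨c, hc, hceq⟩ := hii
  have hc' : φ c ≠ 0 := fun h0 => hc (hφinj (by rw [h0, map_zero]))
  have hii' : aeval (![Polynomial.X, 0] : Fin 2 → Polynomial K) (dehom K F')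
      = Polynomial.C (φ c) * Polynomial.X ^ k := by
    rw [← hf'd, hf'def, aevalX0_map φ f, hceq]
    rw [Polynomial.map_mul, Polynomial.map_C, Polynomial.map_pow, Polynomial.map_X]
  constructor
  · intro hu
    have h0 := totalDegree_eq_zero_of_isUnit hu
    rw [hF'.totalDegree hF'ne] at h0
    omega
  · intro G H hGH
    have hGne : G ≠ 0 := by
      intro h0; rw [h0, zero_mul] at hGH; exact hF'ne hGH
    have hHne : H ≠ 0 := by
      intro h0; rw [h0, mul_zero] at hGH; exact hF'ne hGH
    obtain ⟨hGhom, hHhom, _⟩ := factor_isHomogeneous hGne hHne (hGH ▸ hF')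
    set g := dehom K G with hgdef
    set h := dehom K H with hhdef
    have hgh : f' = g * h := by rw [hf'd, hGH, map_mul]
    have hgne : g ≠ 0 := by
      intro h0
      exact hGne (dehom_inj_homog hGhom (isHomogeneous_zero _ _ _) (by rw [← hgdef, h0, map_zero]))
    have hhne : h ≠ 0 := by
      intro h0
      exact hHne (dehom_inj_homog hHhom (isHomogeneous_zero _ _ _) (by rw [← hhdef, h0, map_zero]))
    obtain hexg := exists_hc_ne_zero hgne
    obtain hexh := exists_hc_ne_zero hhne
    set bg := Nat.find hexg with hbgdef
    set bh := Nat.find hexh with hbhdef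
    have hbg_ne : homogeneousComponent bg g ≠ 0 := Nat.find_spec hexg
    have hbh_ne : homogeneousComponent bh h ≠ 0 := Nat.find_spec hexh
    have hbg_low : ∀ j, j < bg → homogeneousComponent j g = 0 := by
      intro j hj
      by_contra hcon
      exact Nat.find_min hexg hj hcon
    have hbh_low : ∀ j, j < bh → homogeneousComponent j h = 0 := by
      intro j hj
      by_contra hcon
      exact Nat.find_min hexh hj hcon
    have hfmlow : ∀ j, j < bg + bh → homogeneousComponent j f' = 0 := by
      rw [hgh]
      exact hc_mul_bot_lt hbg_low hbh_low
    have hfmtop : homogeneousComponent (bg + bh) f'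
        = homogeneousComponent bg g * homogeneousComponent bh h := by
      rw [hgh]
      exact hc_mul_bot hbg_low hbh_low
    have hmeq : m = bg + bh := by
      rcases lt_trichotomy m (bg + bh) with hlt | heq | hgt
      · exact absurd (hfmlow m hlt) hmne'
      · exact heq
      · exact absurd (hfmtop ▸ hlow' (bg + bh) hgt)
          (mul_ne_zero hbg_ne hbh_ne)
    have hkey2 : coeff (Finsupp.single 0 bg) g ≠ 0 ∨ coeff (Finsupp.single 0 bh) h ≠ 0 := by
      by_contra hcon
      push_neg at hcon
      obtain ⟨hzg, hzh⟩ := hcon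
      have hdvd2 : (X 1 : MvPolynomial (Fin 2) K) ^ 2 ∣ homogeneousComponent m f' := by
        rw [hmeq, hfmtop, pow_two]
        exact mul_dvd_mul (X1_dvd_of_coeff_zero hzg) (X1_dvd_of_coeff_zero hzh)
      rw [hcomp m] at hdvd2
      have hdesc : (X 1 : MvPolynomial (Fin 2) E) ^ 2 ∣ homogeneousComponent m f := by
        rw [X_pow_dvd_iff] at hdvd2 ⊢
        intro d hd
        apply hdvd2 d
        rw [MvPolynomial.support_map_of_injective _ hφinj]
        exact hd
      exact hi.2 hdesc
    rcases hkey2 with hg1 | hh1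
    · left
      exact key hF'ne hF' (by rw [hGH, mul_comm]) hc' hii' hiii hbg_low hg1
    · right
      exact key hF'ne hF' hGH hc' hii' hiii hbh_low hh1

/-- Segre–Barlotti irreducibility criterion: let `F` be homogeneous of degree
`k ≥ 2` over a field `E`, let `f(X,Y) = F(X,Y,1)` be its dehomogenization at `P = ⟨(0,0,1)⟩`
and `m ≥ 1` the multiplicity of `P` on the curve `Z(F)`.  If
(i) the line `Y = 0` counts once among the tangents at `P` (`Y ∣ f_m`, `Y² ∤ f_m`),
(ii) the intersection multiplicity of `Z(F)` with `Y = 0` at `P` is `k`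
    (`f(T,0) = c·T^k`, `c ≠ 0`), and
(iii) `Z(F)` has no linear component through `P`,
then `F` is absolutely irreducible. -/
theorem stmt17 (E : Type*) [Field E] (k : ℕ) (hk : 2 ≤ k)
    (F : MvPolynomial (Fin 3) E) (hF : F.IsHomogeneous k)
    (f : MvPolynomial (Fin 2) E)
    (hf : f = aeval ![X 0, X 1, 1] F)
    (m : ℕ) (hm : 1 ≤ m)
    (hmne : homogeneousComponent m f ≠ 0)
    (hlow : ∀ j < m, homogeneousComponent j f = 0)
    (hi : X 1 ∣ homogeneousComponent m f ∧ ¬ X 1 ^ 2 ∣ homogeneousComponent m f)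
    (hii : ∃ c : E, c ≠ 0 ∧
      aeval ![Polynomial.X, (0 : Polynomial E)] f = Polynomial.C c * Polynomial.X ^ k)
    (hiii : ∀ L : MvPolynomial (Fin 3) (AlgebraicClosure E), L ≠ 0 → L.IsHomogeneous 1 →
      eval ![0, 0, 1] L = 0 →
      ¬ L ∣ MvPolynomial.map (algebraMap E (AlgebraicClosure E)) F) :
    Irreducible (MvPolynomial.map (algebraMap E (AlgebraicClosure E)) F) := by
  exact stmt17' E k hk F hF f hf m hm hmne hlow hi hii hiii
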